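/- For a Schelling game on a path with vertices w_1,…,w_n, |T1| ≥ 4 and |T2| ≥ 2, the assignment in which agents of T1 occupy w_1 and w_2, agents of T2 occupy w_3 through w_{|T2|+2}, and the remaining agents of T1 occupy the rest, is a swap-equilibrium; furthermore, deleting the single edge {w_1, w_2} makes this assignment unstable, so it has edge-robustness zero. -/

import Mathlib

open SimpleGraph

variable {V : Type*}

/-- Utility of the agent occupying vertex `v` in graph `H` under type assignment `τ`:
the fraction of same-type agents among occupied neighbors (0 if no neighbors). -/
noncomputable def utility (H : SimpleGraph V) (τ : V → Bool) (v : V) : ℚ := by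
  classical
  exact if H.neighborSet v = ∅ then 0
    else ((H.neighborSet v ∩ {w | τ w = τ v}).ncard : ℚ) / ((H.neighborSet v).ncard : ℚ)

/-- The type function after the agents on vertices `i` and `j` exchange their vertices. -/
noncomputable def swapAt (τ : V → Bool) (i j : V) : V → Bool := fun v => by
  classical
  exact if v = i then τ j else if v = j then τ i else τ v

/-- The swap of the (distinct-type) agents on `i` and `j` strictly increases both utilities. -/
def ProfitableSwap (H : SimpleGraph V) (τ : V → Bool) (i j : V) : Prop :=
  τ i ≠ τ j ∧
  utility H τ i < utility H (swapAt τ i j) j ∧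
  utility H τ j < utility H (swapAt τ i j) i

/-- Swap-equilibrium: no profitable swap exists. -/
def IsSwapEq (H : SimpleGraph V) (τ : V → Bool) : Prop :=
  ∀ i j : V, ¬ ProfitableSwap H τ i j

/-- The path graph on `Fin n` (vertices `0,…,n-1` with consecutive vertices adjacent). -/
def pathG (n : ℕ) : SimpleGraph (Fin n) where
  Adj u v := u.val + 1 = v.val ∨ v.val + 1 = u.val
  symm := ⟨fun u v h => h.symm⟩
  loopless := ⟨by intro u h; rcases h with h | h <;> omega⟩

/-! ### Auxiliary lemmas -/

lemma swapAt_fst (τ : V → Bool) (i j : V) : swapAt τ i j i = τ j := by simp [swapAt]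

lemma swapAt_snd (τ : V → Bool) {i j : V} (h : j ≠ i) : swapAt τ i j j = τ i := by
  simp [swapAt, h]

lemma swapAt_other (τ : V → Bool) {i j v : V} (h1 : v ≠ i) (h2 : v ≠ j) :
    swapAt τ i j v = τ v := by simp [swapAt, h1, h2]

lemma swapAt_comm (τ : V → Bool) {i j : V} (h : i ≠ j) : swapAt τ i j = swapAt τ j i := by
  funext v
  by_cases h1 : v = i
  · subst h1; simp [swapAt, h]
  · by_cases h2 : v = j
    · subst h2; simp [swapAt, h1, h.symm]
    · simp [swapAt, h1, h2]

lemma utility_single (H : SimpleGraph V) (σ : V → Bool) {v a : V}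
    (h : H.neighborSet v = {a}) :
    utility H σ v = if σ a = σ v then 1 else 0 := by
  classical
  rw [utility, h]
  rw [if_neg (by simp)]
  by_cases ha : σ a = σ v
  · have : ({a} : Set V) ∩ {w | σ w = σ v} = {a} := by
      ext u; simp (config := {contextual := true}) [ha]
    rw [this, if_pos ha]
    simp
  · have : ({a} : Set V) ∩ {w | σ w = σ v} = ∅ := by
      ext u; simp (config := {contextual := true}) [ha]
    rw [this, if_neg ha]
    simp

lemma utility_pair (H : SimpleGraph V) (σ : V → Bool) {v a b : V} (hab : a ≠ b)
    (h : H.neighborSet v = {a, b}) :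
    utility H σ v =
      ((if σ a = σ v then (1:ℚ) else 0) + (if σ b = σ v then (1:ℚ) else 0)) / 2 := by
  classical
  rw [utility, h]
  rw [if_neg (by exact Set.insert_nonempty a {b} |>.ne_empty)]
  rw [Set.ncard_pair hab]
  by_cases ha : σ a = σ v <;> by_cases hb : σ b = σ v
  · have : ({a, b} : Set V) ∩ {w | σ w = σ v} = {a, b} := by
      ext u
      simp only [Set.mem_inter_iff, Set.mem_insert_iff, Set.mem_singleton_iff, Set.mem_setOf_eq]
      constructor
      · tauto
      · rintro (rfl | rfl) <;> simp [ha, hb]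
    rw [this, Set.ncard_pair hab, if_pos ha, if_pos hb]; norm_num
  · have : ({a, b} : Set V) ∩ {w | σ w = σ v} = {a} := by
      ext u
      simp only [Set.mem_inter_iff, Set.mem_insert_iff, Set.mem_singleton_iff, Set.mem_setOf_eq]
      constructor
      · rintro ⟨rfl | rfl, h2⟩
        · rfl
        · exact absurd h2 hb
      · rintro rfl; exact ⟨Or.inl rfl, ha⟩
    rw [this, Set.ncard_singleton, if_pos ha, if_neg hb]; norm_num
  · have : ({a, b} : Set V) ∩ {w | σ w = σ v} = {b} := by
      ext u
      simp only [Set.mem_inter_iff, Set.mem_insert_iff, Set.mem_singleton_iff, Set.mem_setOf_eq]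
      constructor
      · rintro ⟨rfl | rfl, h2⟩
        · exact absurd h2 ha
        · rfl
      · rintro rfl; exact ⟨Or.inr rfl, hb⟩
    rw [this, Set.ncard_singleton, if_neg ha, if_pos hb]; norm_num
  · have : ({a, b} : Set V) ∩ {w | σ w = σ v} = ∅ := by
      ext u
      simp only [Set.mem_inter_iff, Set.mem_insert_iff, Set.mem_singleton_iff, Set.mem_setOf_eq,
        Set.mem_empty_iff_false, iff_false, not_and]
      rintro (rfl | rfl) <;> assumption
    rw [this, Set.ncard_empty, if_neg ha, if_neg hb]; norm_num

lemma pathG_nbr_mid {n : ℕ} (v : Fin n) (h1 : 0 < v.val) (h2 : v.val + 1 < n) :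
    (pathG n).neighborSet v = {⟨v.val - 1, by omega⟩, ⟨v.val + 1, h2⟩} := by
  ext u
  simp only [mem_neighborSet, pathG, Set.mem_insert_iff, Set.mem_singleton_iff, Fin.ext_iff]
  omega

lemma pathG_nbr_zero {n : ℕ} (v : Fin n) (h0 : v.val = 0) (h2 : 1 < n) :
    (pathG n).neighborSet v = {⟨1, h2⟩} := by
  ext u
  simp only [mem_neighborSet, pathG, Set.mem_singleton_iff, Fin.ext_iff]
  omega

lemma pathG_nbr_last {n : ℕ} (v : Fin n) (h0 : v.val + 1 = n) (h2 : 2 ≤ n) :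
    (pathG n).neighborSet v = {⟨v.val - 1, by omega⟩} := by
  ext u
  simp only [mem_neighborSet, pathG, Set.mem_singleton_iff, Fin.ext_iff]
  omega

lemma del_nbr_one {n : ℕ} (h : 2 < n) :
    (((pathG n).deleteEdges
        {s((⟨0, by omega⟩ : Fin n), (⟨1, by omega⟩ : Fin n))}).neighborSet ⟨1, by omega⟩ :
        Set (Fin n)) = {(⟨2, h⟩ : Fin n)} := by
  ext u
  simp only [mem_neighborSet, deleteEdges_adj, Set.mem_singleton_iff, Sym2.eq_iff, pathG,
    Fin.ext_iff, true_and, false_and, and_true, and_false, or_false, false_or, not_or]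
  omega

lemma del_nbr_ge2 {n : ℕ} (v : Fin n) (hv : 2 ≤ v.val) (h1 : 1 < n) :
    (((pathG n).deleteEdges
        {s((⟨0, by omega⟩ : Fin n), (⟨1, by omega⟩ : Fin n))}).neighborSet v) =
      (pathG n).neighborSet v := by
  ext u
  simp only [mem_neighborSet, deleteEdges_adj, Set.mem_singleton_iff, Sym2.eq_iff, pathG,
    Fin.ext_iff, true_and, false_and, and_true, and_false, or_false, false_or, not_or]
  omega

lemma falseSide (n t1 t2 : ℕ) (hn : n = t1 + t2) (h1 : 4 ≤ t1) (h2 : 2 ≤ t2)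
    (τ : Fin n → Bool) (hτ : ∀ v : Fin n, τ v = decide (v.val < 2 ∨ t2 + 2 ≤ v.val))
    (j : Fin n) (hj2 : 2 ≤ j.val) (hjt : j.val < t2 + 2) :
    (1:ℚ)/2 ≤ utility (pathG n) τ j := by
  have hjlt : j.val + 1 < n := by omega
  have hj0 : 0 < j.val := by omega
  have hne : (⟨j.val - 1, by omega⟩ : Fin n) ≠ ⟨j.val + 1, hjlt⟩ := by
    simp only [ne_eq, Fin.ext_iff, Fin.val_mk]; omega
  rw [utility_pair (pathG n) τ hne (pathG_nbr_mid j hj0 hjlt)]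
  have hτj : τ j = false := by
    rw [hτ]; simp only [decide_eq_false_iff_not, not_or, not_lt, not_le]; omega
  rcases Nat.lt_or_ge j.val 3 with hc | hc
  · have hr : τ (⟨j.val + 1, hjlt⟩ : Fin n) = false := by
      rw [hτ]; simp only [decide_eq_false_iff_not, not_or, not_lt, not_le]
      constructor <;> omega
    rw [hr, hτj]
    split_ifs <;> simp_all <;> norm_num
  · have hl : τ (⟨j.val - 1, by omega⟩ : Fin n) = false := by
      rw [hτ]; simp only [decide_eq_false_iff_not, not_or, not_lt, not_le]
      constructor <;> omega
    rw [hl, hτj]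
    split_ifs <;> simp_all <;> norm_num

lemma trueSide (n t1 t2 : ℕ) (hn : n = t1 + t2) (h1 : 4 ≤ t1) (h2 : 2 ≤ t2)
    (τ : Fin n → Bool) (hτ : ∀ v : Fin n, τ v = decide (v.val < 2 ∨ t2 + 2 ≤ v.val))
    (i j : Fin n) (hi : i.val < 2 ∨ t2 + 2 ≤ i.val)
    (hj2 : 2 ≤ j.val) (hjt : j.val < t2 + 2) :
    utility (pathG n) (swapAt τ i j) i ≤ (1:ℚ)/2 := by
  have hn6 : t2 + 4 ≤ n := by omega
  have hτj : τ j = false := by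
    rw [hτ]; simp only [decide_eq_false_iff_not, not_or, not_lt, not_le]; omega
  have hσi : swapAt τ i j i = false := by rw [swapAt_fst]; exact hτj
  have htrue : ∀ x : Fin n, (x.val < 2 ∨ t2 + 2 ≤ x.val) → τ x = true := by
    intro x hx; rw [hτ]; simpa using hx
  rcases hi with hi | hi
  · by_cases hi0 : i.val = 0
    · rw [utility_single (pathG n) (swapAt τ i j) (pathG_nbr_zero i hi0 (by omega))]
      have e1 : (⟨1, by omega⟩ : Fin n) ≠ i := by simp only [ne_eq, Fin.ext_iff, Fin.val_mk]; omega
      have e2 : (⟨1, by omega⟩ : Fin n) ≠ j := by simp only [ne_eq, Fin.ext_iff, Fin.val_mk]; omega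
      rw [swapAt_other τ e1 e2, hσi, htrue ⟨1, by omega⟩ (by simp only [Fin.val_mk]; omega)]
      norm_num
    · have hi1 : i.val = 1 := by omega
      have hmid1 : 0 < i.val := by omega
      have hmid2 : i.val + 1 < n := by omega
      have hne : (⟨i.val - 1, by omega⟩ : Fin n) ≠ ⟨i.val + 1, hmid2⟩ := by
        simp only [ne_eq, Fin.ext_iff, Fin.val_mk]; omega
      rw [utility_pair (pathG n) (swapAt τ i j) hne (pathG_nbr_mid i hmid1 hmid2)]
      have e1 : (⟨i.val - 1, by omega⟩ : Fin n) ≠ i := by simp only [ne_eq, Fin.ext_iff, Fin.val_mk]; omega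
      have e2 : (⟨i.val - 1, by omega⟩ : Fin n) ≠ j := by simp only [ne_eq, Fin.ext_iff, Fin.val_mk]; omega
      rw [swapAt_other τ e1 e2, hσi, htrue ⟨i.val - 1, by omega⟩ (by simp only [Fin.val_mk]; omega)]
      split_ifs <;> simp_all <;> norm_num
  · by_cases hlast : i.val + 1 = n
    · rw [utility_single (pathG n) (swapAt τ i j) (pathG_nbr_last i hlast (by omega))]
      have e1 : (⟨i.val - 1, by omega⟩ : Fin n) ≠ i := by simp only [ne_eq, Fin.ext_iff, Fin.val_mk]; omega
      have e2 : (⟨i.val - 1, by omega⟩ : Fin n) ≠ j := by simp only [ne_eq, Fin.ext_iff, Fin.val_mk]; omega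
      rw [swapAt_other τ e1 e2, hσi, htrue ⟨i.val - 1, by omega⟩ (by simp only [Fin.val_mk]; omega)]
      norm_num
    · have hmid1 : 0 < i.val := by omega
      have hmid2 : i.val + 1 < n := by omega
      have hne : (⟨i.val - 1, by omega⟩ : Fin n) ≠ ⟨i.val + 1, hmid2⟩ := by
        simp only [ne_eq, Fin.ext_iff, Fin.val_mk]; omega
      rw [utility_pair (pathG n) (swapAt τ i j) hne (pathG_nbr_mid i hmid1 hmid2)]
      have e1 : (⟨i.val + 1, hmid2⟩ : Fin n) ≠ i := by simp only [ne_eq, Fin.ext_iff, Fin.val_mk]; omega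
      have e2 : (⟨i.val + 1, hmid2⟩ : Fin n) ≠ j := by simp only [ne_eq, Fin.ext_iff, Fin.val_mk]; omega
      rw [swapAt_other τ e1 e2, hσi, htrue ⟨i.val + 1, hmid2⟩ (by simp only [Fin.val_mk]; omega)]
      split_ifs <;> simp_all <;> norm_num

/-- On a path `w_1,…,w_n` with `|T1| ≥ 4`, `|T2| ≥ 2`, the assignment with `T1` on
`w_1, w_2`, `T2` on `w_3,…,w_{|T2|+2}`, and `T1` on the rest is a swap-equilibrium, and
deleting the single edge `{w_1, w_2}` makes it unstable (edge-robustness zero). -/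
theorem path_equilibrium_edge_robustness_zero (n t1 t2 : ℕ)
    (hn : n = t1 + t2) (h1 : 4 ≤ t1) (h2 : 2 ≤ t2)
    (τ : Fin n → Bool)
    (hτ : ∀ v : Fin n, τ v = decide (v.val < 2 ∨ t2 + 2 ≤ v.val)) :
    IsSwapEq (pathG n) τ ∧
    ¬ IsSwapEq ((pathG n).deleteEdges
        {s((⟨0, by omega⟩ : Fin n), (⟨1, by omega⟩ : Fin n))}) τ := by
  have hn6 : t2 + 4 ≤ n := by omega
  have htrue : ∀ x : Fin n, (x.val < 2 ∨ t2 + 2 ≤ x.val) → τ x = true := by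
    intro x hx; rw [hτ]; simpa using hx
  have hfalse : ∀ x : Fin n, 2 ≤ x.val → x.val < t2 + 2 → τ x = false := by
    intro x hx1 hx2; rw [hτ]
    simp only [decide_eq_false_iff_not, not_or, not_lt, not_le]; omega
  constructor
  · rintro i j ⟨hne, hlt1, hlt2⟩
    have hij : i ≠ j := fun h => hne (by rw [h])
    by_cases hti : τ i = true
    · have htj : τ j = false := by
        cases hj : τ j
        · rfl
        · exact absurd (hti.trans hj.symm) hne
      have hiP : i.val < 2 ∨ t2 + 2 ≤ i.val := by
        have := (hτ i).symm.trans hti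
        simpa using this
      have hjP : ¬(j.val < 2 ∨ t2 + 2 ≤ j.val) := by
        have := (hτ j).symm.trans htj
        simpa using this
      push_neg at hjP
      have := le_trans (trueSide n t1 t2 hn h1 h2 τ hτ i j hiP hjP.1 (by omega))
        (falseSide n t1 t2 hn h1 h2 τ hτ j hjP.1 (by omega))
      exact absurd hlt2 (not_lt.mpr this)
    · have hti' : τ i = false := by
        rcases Bool.eq_false_or_eq_true (τ i) with h | h
        · exact absurd h hti
        · exact h
      have htj : τ j = true := by
        rcases Bool.eq_false_or_eq_true (τ j) with h | h
        · exact h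
        · exact absurd (hti'.trans h.symm) hne
      have hjP2 : j.val < 2 ∨ t2 + 2 ≤ j.val := by
        have := (hτ j).symm.trans htj
        simpa using this
      have hiP2 : ¬(i.val < 2 ∨ t2 + 2 ≤ i.val) := by
        have := (hτ i).symm.trans hti'
        simpa using this
      push_neg at hiP2
      have key := le_trans (trueSide n t1 t2 hn h1 h2 τ hτ j i hjP2 hiP2.1 (by omega))
        (falseSide n t1 t2 hn h1 h2 τ hτ i hiP2.1 (by omega))
      rw [swapAt_comm τ hij] at hlt1
      exact absurd hlt1 (not_lt.mpr key)
  · intro hEq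
    apply hEq ⟨1, by omega⟩ ⟨t2 + 1, by omega⟩
    have hτ1 : τ ⟨1, by omega⟩ = true := htrue _ (Or.inl (by simp only [Fin.val_mk]; omega))
    have hτt21 : τ ⟨t2 + 1, by omega⟩ = false :=
      hfalse _ (by simp only [Fin.val_mk]; omega) (by simp only [Fin.val_mk]; omega)
    have hτ2 : τ ⟨2, by omega⟩ = false :=
      hfalse _ (by simp only [Fin.val_mk]; omega) (by simp only [Fin.val_mk]; omega)
    have hτt2 : τ ⟨t2, by omega⟩ = false :=
      hfalse _ (by simp only [Fin.val_mk]; omega) (by simp only [Fin.val_mk]; omega)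
    have hτt22 : τ ⟨t2 + 2, by omega⟩ = true :=
      htrue _ (Or.inr (by simp only [Fin.val_mk]; omega))
    have hij : (⟨t2 + 1, by omega⟩ : Fin n) ≠ ⟨1, by omega⟩ := by
      simp only [ne_eq, Fin.ext_iff, Fin.val_mk]; omega
    have hmidne : (⟨t2, by omega⟩ : Fin n) ≠ (⟨t2 + 2, by omega⟩ : Fin n) := by
      simp only [ne_eq, Fin.ext_iff, Fin.val_mk]; omega
    have hnbrj : (((pathG n).deleteEdges
        {s((⟨0, by omega⟩ : Fin n), (⟨1, by omega⟩ : Fin n))}).neighborSet ⟨t2 + 1, by omega⟩) =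
        {(⟨t2, by omega⟩ : Fin n), (⟨t2 + 2, by omega⟩ : Fin n)} := by
      rw [del_nbr_ge2 _ (by simp only [Fin.val_mk]; omega) (by omega)]
      have := pathG_nbr_mid (⟨t2 + 1, by omega⟩ : Fin n) (by simp only [Fin.val_mk]; omega)
        (by simp only [Fin.val_mk]; omega)
      convert this using 2 <;> simp only [Fin.ext_iff, Fin.val_mk] <;> omega
    refine ⟨by rw [hτ1, hτt21]; simp, ?_, ?_⟩
    · -- agent at 1 (true) strictly improves by moving to t2+1
      rw [utility_single _ τ (del_nbr_one (by omega)),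
        utility_pair _ (swapAt τ ⟨1, by omega⟩ ⟨t2 + 1, by omega⟩) hmidne hnbrj]
      rw [hτ2, hτ1]
      rw [swapAt_other τ (i := ⟨1, by omega⟩) (j := ⟨t2 + 1, by omega⟩)
          (by simp only [ne_eq, Fin.ext_iff, Fin.val_mk]; omega)
          (by simp only [ne_eq, Fin.ext_iff, Fin.val_mk]; omega) (v := ⟨t2, by omega⟩),
        swapAt_other τ (i := ⟨1, by omega⟩) (j := ⟨t2 + 1, by omega⟩)
          (by simp only [ne_eq, Fin.ext_iff, Fin.val_mk]; omega)
          (by simp only [ne_eq, Fin.ext_iff, Fin.val_mk]; omega) (v := ⟨t2 + 2, by omega⟩),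
        swapAt_snd τ hij, hτt2, hτt22, hτ1]
      norm_num
    · -- agent at t2+1 (false) strictly improves by moving to 1
      rw [utility_pair _ τ hmidne hnbrj, utility_single _
          (swapAt τ ⟨1, by omega⟩ ⟨t2 + 1, by omega⟩) (del_nbr_one (by omega))]
      rw [hτt2, hτt22, hτt21]
      rw [swapAt_other τ (i := ⟨1, by omega⟩) (j := ⟨t2 + 1, by omega⟩)
          (by simp only [ne_eq, Fin.ext_iff, Fin.val_mk]; omega)
          (by simp only [ne_eq, Fin.ext_iff, Fin.val_mk]; omega) (v := ⟨2, by omega⟩),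
        swapAt_fst τ, hτ2, hτt21]
      norm_num
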